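/- Let (X, R) be an s-class Q-polynomial association scheme with m = rank(E_1) and l = max{k : q_{1,0}^0 = ⋯ = q_{1,k}^k = 0}. If (s-1)/2 ≤ l ≤ s-1, then |X| ≤ C(m+2l-s, 2l+1-s) + C(m+s-1, s). -/

import Mathlib

open Matrix Finset

/-- The all-ones matrix. -/
def allOnes (X : Type*) : Matrix X X ℝ := Matrix.of fun _ _ => (1 : ℝ)

section

variable {X : Type*} [Fintype X] [DecidableEq X]

/-- `A 0, …, A s` are the adjacency matrices of a symmetric association scheme of
class `s` on `X`. -/
structure IsAssocScheme (s : ℕ) (A : ℕ → Matrix X X ℝ) : Prop where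
  zero_one : ∀ i ≤ s, ∀ x y, A i x y = 0 ∨ A i x y = 1
  nonempty : ∀ i ≤ s, A i ≠ 0
  eq_one : A 0 = 1
  sum_eq : ∑ i ∈ Finset.range (s + 1), A i = allOnes X
  symm : ∀ i ≤ s, (A i)ᵀ = A i
  mul_closed : ∀ i ≤ s, ∀ j ≤ s, ∃ p : ℕ → ℝ,
    A i * A j = ∑ k ∈ Finset.range (s + 1), p k • A k

/-- `E 0, …, E s` are the primitive idempotents of the scheme, with
`E 0 = |X|⁻¹ J`. -/
structure IsPrimIdem (s : ℕ) (A E : ℕ → Matrix X X ℝ) : Prop where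
  symm : ∀ i ≤ s, (E i).IsSymm
  mem_span : ∀ i ≤ s, ∃ q : ℕ → ℝ, E i = ∑ k ∈ Finset.range (s + 1), q k • A k
  orth_idem : ∀ i ≤ s, ∀ j ≤ s, E i * E j = if i = j then E i else 0
  sum_eq : ∑ i ∈ Finset.range (s + 1), E i = 1
  zero_eq : E 0 = (Fintype.card X : ℝ)⁻¹ • allOnes X

/-- `q` is the family of Krein parameters:
`E i ∘ E j = |X|⁻¹ ∑_k q i j k • E k` (entrywise product). -/
def IsKrein (s : ℕ) (E : ℕ → Matrix X X ℝ) (q : ℕ → ℕ → ℕ → ℝ) : Prop :=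
  ∀ i ≤ s, ∀ j ≤ s, Matrix.hadamard (E i) (E j) =
    (Fintype.card X : ℝ)⁻¹ • ∑ k ∈ Finset.range (s + 1), q i j k • E k

/-- The scheme is `Q`-polynomial with respect to the ordering `E 0, …, E s`:
`q 1 j k > 0` for `k = j ± 1` and `q 1 j k = 0` for `|k - j| > 1`. -/
def IsQPoly (s : ℕ) (q : ℕ → ℕ → ℕ → ℝ) : Prop :=
  (∀ j ≤ s, ∀ k ≤ s, (k = j + 1 ∨ j = k + 1) → 0 < q 1 j k) ∧
  (∀ j ≤ s, ∀ k ≤ s, (j + 1 < k ∨ k + 1 < j) → q 1 j k = 0)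

end

noncomputable section AuxHelpers

variable {X : Type*} [Fintype X] [DecidableEq X]

/-- Hadamard powers of a matrix, with 0-th power the all-ones matrix. -/
def hadPow (M : Matrix X X ℝ) : ℕ → Matrix X X ℝ
  | 0 => allOnes X
  | h + 1 => Matrix.hadamard M (hadPow M h)

lemma matrix_rank_add_le (A B : Matrix X X ℝ) : (A + B).rank ≤ A.rank + B.rank := by
  have hdef : ∀ C : Matrix X X ℝ, C.rank = Module.finrank ℝ (LinearMap.range C.mulVecLin) :=
    fun _ => rfl
  have h1 : LinearMap.range (A + B).mulVecLin ≤
      LinearMap.range A.mulVecLin ⊔ LinearMap.range B.mulVecLin := by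
    rintro x ⟨y, rfl⟩
    rw [Matrix.mulVecLin_add, LinearMap.add_apply]
    exact Submodule.add_mem_sup ⟨y, rfl⟩ ⟨y, rfl⟩
  rw [hdef, hdef, hdef]
  exact le_trans (Submodule.finrank_mono h1)
    (Submodule.finrank_add_le_finrank_add_finrank _ _)

lemma posSemidef_hadamard {A B : Matrix X X ℝ} (hA : A.PosSemidef) (hB : B.PosSemidef) :
    (Matrix.hadamard A B).PosSemidef := by
  obtain ⟨C, hC⟩ : ∃ C : Matrix X X ℝ, B = Cᴴ * C := by
    open scoped MatrixOrder in
    exact CStarAlgebra.nonneg_iff_eq_star_mul_self.mp hB.nonneg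
  have hsum : Matrix.hadamard A B
      = ∑ k : X, Matrix.diagonal (fun i => C k i) * A * Matrix.diagonal (fun i => C k i) := by
    ext i j
    rw [Matrix.sum_apply]
    have hterm : ∀ k : X,
        (Matrix.diagonal (fun i => C k i) * A * Matrix.diagonal (fun i => C k i)) i j
          = C k i * A i j * C k j := by
      intro k
      rw [Matrix.mul_diagonal, Matrix.diagonal_mul]
    rw [Finset.sum_congr rfl fun k _ => hterm k]
    have hB' : B i j = ∑ k : X, C k i * C k j := by
      rw [hC, Matrix.mul_apply]
      exact Finset.sum_congr rfl fun k _ => by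
        simp [Matrix.conjTranspose_apply]
    rw [Matrix.hadamard_apply, hB', Finset.mul_sum]
    exact Finset.sum_congr rfl fun k _ => by ring
  rw [hsum]
  refine Finset.sum_induction _ _ (fun a b ha hb => ha.add hb) Matrix.PosSemidef.zero ?_
  intro k _
  have hD : (Matrix.diagonal (fun i => C k i))ᴴ = Matrix.diagonal (fun i => C k i) := by
    rw [Matrix.diagonal_conjTranspose]
    congr 1
  have := hA.mul_mul_conjTranspose_same (B := Matrix.diagonal (fun i => C k i))
  rwa [hD] at this

lemma nonneg_of_smul_posSemidef {P : Matrix X X ℝ} (hP : P.PosSemidef) (hP0 : P ≠ 0) {c : ℝ}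
    (h : (c • P).PosSemidef) : 0 ≤ c := by
  obtain ⟨x, hx⟩ : ∃ x, P *ᵥ x ≠ 0 := by
    by_contra hcon
    push_neg at hcon
    apply hP0
    ext i j
    have := congrFun (hcon (Pi.single j 1)) i
    simpa [Matrix.mulVec_single] using this
  have h1 : 0 < x ⬝ᵥ P *ᵥ x := by
    have h0 : 0 ≤ x ⬝ᵥ P *ᵥ x := by simpa using hP.dotProduct_mulVec_nonneg x
    rcases h0.lt_or_eq with h' | h'
    · exact h'
    · exact absurd ((hP.dotProduct_mulVec_zero_iff x).mp (by simpa using h'.symm)) hx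
  have h2 : 0 ≤ c * (x ⬝ᵥ P *ᵥ x) := by
    have h3 := h.dotProduct_mulVec_nonneg x
    rw [show star x = x from funext fun i => star_trivial _] at h3
    rwa [Matrix.smul_mulVec, dotProduct_smul, smul_eq_mul] at h3
  nlinarith

lemma rank_hadPow_le (M : Matrix X X ℝ) (h : ℕ) :
    (hadPow M h).rank ≤ Nat.multichoose M.rank h := by
  classical
  have hfr : Module.finrank ℝ (Submodule.span ℝ (Set.range Mᵀ)) = M.rank :=
    (M.rank_eq_finrank_span_cols).symm
  set m := Module.finrank ℝ (Submodule.span ℝ (Set.range Mᵀ))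
  let b := Module.finBasis ℝ (Submodule.span ℝ (Set.range Mᵀ))
  let u : Fin m → (X → ℝ) := fun i => (b i : X → ℝ)
  have hWu : Submodule.span ℝ (Set.range u) = Submodule.span ℝ (Set.range Mᵀ) := by
    have hru : Set.range u
        = (Submodule.span ℝ (Set.range Mᵀ)).subtype '' (Set.range b) := by
      rw [← Set.range_comp]; rfl
    rw [hru, ← Submodule.map_span, b.span_eq, Submodule.map_top, Submodule.range_subtype]
  let g : (h : ℕ) → Sym (Fin m) h → (X → ℝ) :=
    fun h σ => fun x => (σ.1.map (fun i => u i x)).prod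
  have hcol : ∀ h : ℕ, ∀ y : X, (fun x => hadPow M h x y) ∈
      Submodule.span ℝ (Set.range (g h)) := by
    intro h
    induction h with
    | zero =>
      intro y
      apply Submodule.subset_span
      refine ⟨⟨0, rfl⟩, ?_⟩
      funext x
      simp [g, hadPow, allOnes]
      rfl
    | succ h ih =>
      intro y
      have hcolM : (fun x => M x y) ∈ Submodule.span ℝ (Set.range u) := by
        rw [hWu]; exact Submodule.subset_span ⟨y, rfl⟩
      have hmul : (fun x => hadPow M (h+1) x y)
          = (fun x => M x y) * (fun x => hadPow M h x y) := by
        funext x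
        simp [hadPow, Matrix.hadamard_apply]
      rw [hmul]
      have hmem := Submodule.mul_mem_mul hcolM (ih y)
      rw [Submodule.span_mul_span] at hmem
      refine Submodule.span_mono ?_ hmem
      rintro f ⟨a, ⟨i, rfl⟩, c, ⟨σ, rfl⟩, rfl⟩
      refine ⟨i ::ₛ σ, ?_⟩
      funext x
      simp [g, Sym.coe_cons, Pi.mul_apply]
  have hr1 : (hadPow M h).rank ≤ Module.finrank ℝ (Submodule.span ℝ (Set.range (g h))) := by
    rw [Matrix.rank_eq_finrank_span_cols]
    apply Submodule.finrank_mono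
    rw [Submodule.span_le]
    rintro f ⟨y, rfl⟩
    exact hcol h y
  refine hr1.trans ?_
  have hr2 : Module.finrank ℝ (Submodule.span ℝ (Set.range (g h)))
      ≤ Fintype.card (Sym (Fin m) h) := finrank_range_le_card (g h)
  refine hr2.trans ?_
  rw [Sym.card_sym_eq_multichoose, Fintype.card_fin]
  exact (congrArg (fun t => Nat.multichoose t h) hfr).le

end AuxHelpers

set_option maxHeartbeats 1000000 in
/-- Let `(X, R)` be an `s`-class `Q`-polynomial scheme, `m = rank (E 1)`, and
`l = max{k : q 1 0 0 = ⋯ = q 1 k k = 0}`.  If `(s - 1)/2 ≤ l ≤ s - 1` then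
`|X| ≤ C(m + 2l - s, 2l + 1 - s) + C(m + s - 1, s)`. -/
theorem card_le_QPoly_large_l (X : Type*) [Fintype X] [DecidableEq X] (s : ℕ) (hs : 1 ≤ s)
    (A E : ℕ → Matrix X X ℝ) (q : ℕ → ℕ → ℕ → ℝ)
    (hA : IsAssocScheme s A) (hE : IsPrimIdem s A E)
    (hK : IsKrein s E q) (hQ : IsQPoly s q)
    (l : ℕ) (ha : ∀ k ≤ l, q 1 k k = 0) (hmax : q 1 (l + 1) (l + 1) ≠ 0)
    (hl1 : s ≤ 2 * l + 1) (hl2 : l + 1 ≤ s) :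
    Fintype.card X ≤ ((E 1).rank + 2 * l - s).choose (2 * l + 1 - s) +
      ((E 1).rank + s - 1).choose s := by
  classical
  rcases isEmpty_or_nonempty X with hX | hX
  · rw [Fintype.card_eq_zero]
    exact Nat.zero_le _
  have hnpos : (0:ℝ) < (Fintype.card X : ℝ) := by
    have : 0 < Fintype.card X := Fintype.card_pos
    exact_mod_cast this
  set n : ℝ := (Fintype.card X : ℝ) with hn
  -- basic facts about the idempotents
  have hEsym : ∀ k ≤ s, (E k)ᴴ = E k := by
    intro k hk
    have h1 := hE.symm k hk
    ext i j
    simp only [Matrix.conjTranspose_apply, star_trivial]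
    calc E k j i = (E k)ᵀ i j := rfl
      _ = E k i j := by rw [h1]
  have hEE : ∀ k ≤ s, E k * E k = E k := by
    intro k hk
    have h2 := hE.orth_idem k hk k hk
    rwa [if_pos rfl] at h2
  have hEE' : ∀ k ≤ s, ∀ k' ≤ s, k ≠ k' → E k * E k' = 0 := by
    intro k hk k' hk' hne
    have h2 := hE.orth_idem k hk k' hk'
    rwa [if_neg hne] at h2
  have hPSD : ∀ k ≤ s, (E k).PosSemidef := by
    intro k hk
    have h1 : E k = (E k)ᴴ * E k := by
      rw [hEsym k hk]
      exact (hEE k hk).symm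
    rw [h1]
    exact Matrix.posSemidef_conjTranspose_mul_self _
  have hkey : ∀ j ≤ s, ∀ k ≤ s,
      E k * Matrix.hadamard (E 1) (E j) * E k = (n⁻¹ * q 1 j k) • E k := by
    intro j hj k hk
    rw [hK 1 hs j hj, Matrix.mul_smul, Matrix.smul_mul, Finset.mul_sum, Finset.sum_mul]
    rw [Finset.sum_eq_single k]
    · rw [mul_smul_comm, smul_mul_assoc, hEE k hk, hEE k hk, smul_smul]
    · intro k' hk' hne
      have hk's : k' ≤ s := by
        have := Finset.mem_range.mp hk'; omega
      rw [mul_smul_comm, smul_mul_assoc, hEE' k hk k' hk's (Ne.symm hne)]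
      simp
    · intro habs
      exact absurd (Finset.mem_range.mpr (by omega)) habs
  -- all idempotents are nonzero
  have hEne : ∀ k ≤ s, E k ≠ 0 := by
    intro k
    induction k with
    | zero =>
      intro _ h0
      obtain ⟨x⟩ := hX
      rw [hE.zero_eq] at h0
      have h1 := congrFun (congrFun h0 x) x
      simp only [Matrix.smul_apply, allOnes, Matrix.of_apply, smul_eq_mul, mul_one,
        Matrix.zero_apply] at h1
      exact (inv_ne_zero (ne_of_gt hnpos)) h1
    | succ k ih =>
      intro hk1 h0
      have hk : k ≤ s := by omega
      have hid := hkey (k+1) hk1 k hk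
      rw [h0, Matrix.hadamard_zero, Matrix.mul_zero, Matrix.zero_mul] at hid
      have hq := hQ.1 (k+1) hk1 k hk (Or.inr rfl)
      have hc : n⁻¹ * q 1 (k+1) k ≠ 0 :=
        ne_of_gt (mul_pos (inv_pos.mpr hnpos) hq)
      have hzero : E k = 0 := by
        calc E k = (n⁻¹ * q 1 (k+1) k)⁻¹ • ((n⁻¹ * q 1 (k+1) k) • E k) := by
              rw [smul_smul, inv_mul_cancel₀ hc, one_smul]
          _ = 0 := by rw [← hid, smul_zero]
      exact ih hk hzero
  -- Krein parameters are nonnegative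
  have hq0 : ∀ j ≤ s, ∀ k ≤ s, 0 ≤ q 1 j k := by
    intro j hj k hk
    have hps : ((n⁻¹ * q 1 j k) • E k).PosSemidef := by
      rw [← hkey j hj k hk]
      have h1 := (posSemidef_hadamard (hPSD 1 hs) (hPSD j hj)).mul_mul_conjTranspose_same
        (B := E k)
      rwa [hEsym k hk] at h1
    have h2 := nonneg_of_smul_posSemidef (hPSD k hk) (hEne k hk) hps
    nlinarith [inv_pos.mpr hnpos]
  have hq11 : 0 < q 1 (l+1) (l+1) :=
    lt_of_le_of_ne (hq0 (l+1) hl2 (l+1) hl2) (Ne.symm hmax)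
  -- expansion of Hadamard powers in terms of the idempotents
  have expand : ∀ h : ℕ, ∃ c : ℕ → ℝ,
      hadPow (E 1) h = ∑ k ∈ Finset.range (s+1), c k • E k ∧
      (∀ k, k ≤ s → 0 ≤ c k) ∧
      (∀ k, k ≤ s →
        ((k ≤ h ∧ h % 2 = k % 2) ∨
          (h % 2 ≠ k % 2 ∧ l + 2 + ((k - (l+1)) + ((l+1) - k)) ≤ h))
        → 0 < c k) := by
    intro h
    induction h with
    | zero =>
      refine ⟨fun k => if k = 0 then n else 0, ?_, ?_, ?_⟩
      · rw [Finset.sum_eq_single 0]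
        · show allOnes X = n • E 0
          rw [hE.zero_eq, smul_smul, mul_inv_cancel₀ (ne_of_gt hnpos), one_smul]
        · intro k _ hk0
          simp [hk0]
        · intro habs
          exact absurd (Finset.mem_range.mpr (by omega)) habs
      · intro k _
        dsimp only
        split
        · exact le_of_lt hnpos
        · exact le_refl 0
      · intro k hks hgood
        have hk0 : k = 0 := by omega
        rw [hk0]
        simpa using hnpos
    | succ h ih =>
      obtain ⟨c, hcE, hc0, hcpos⟩ := ih
      refine ⟨fun k => n⁻¹ * ∑ j ∈ Finset.range (s+1), c j * q 1 j k, ?_, ?_, ?_⟩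
      · show Matrix.hadamard (E 1) (hadPow (E 1) h) = _
        rw [hcE]
        have h1 : Matrix.hadamard (E 1) (∑ k ∈ Finset.range (s+1), c k • E k)
            = ∑ k ∈ Finset.range (s+1), c k • Matrix.hadamard (E 1) (E k) := by
          ext x y
          rw [Matrix.hadamard_apply, Matrix.sum_apply, Matrix.sum_apply, Finset.mul_sum]
          refine Finset.sum_congr rfl fun k _ => ?_
          rw [Matrix.smul_apply, Matrix.smul_apply, Matrix.hadamard_apply, smul_eq_mul,
            smul_eq_mul]
          ring
        rw [h1]
        have h2 : ∀ k ∈ Finset.range (s+1), c k • Matrix.hadamard (E 1) (E k)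
            = ∑ k' ∈ Finset.range (s+1), (c k * (n⁻¹ * q 1 k k')) • E k' := by
          intro k hkmem
          have hks : k ≤ s := by
            have := Finset.mem_range.mp hkmem; omega
          rw [hK 1 hs k hks, smul_smul, Finset.smul_sum]
          refine Finset.sum_congr rfl fun k' _ => ?_
          rw [smul_smul, mul_assoc]
        rw [Finset.sum_congr rfl h2, Finset.sum_comm]
        refine Finset.sum_congr rfl fun k' _ => ?_
        dsimp only
        rw [Finset.mul_sum, Finset.sum_smul]
        exact Finset.sum_congr rfl fun k _ => by rw [mul_left_comm]
      · intro k hk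
        refine mul_nonneg (inv_nonneg.mpr hnpos.le) (Finset.sum_nonneg fun j hj => ?_)
        have hjs : j ≤ s := by
          have := Finset.mem_range.mp hj; omega
        exact mul_nonneg (hc0 j hjs) (hq0 j hjs k hk)
      · intro k hks hgood
        obtain ⟨j0, hj0s, hj0g, hj0q⟩ : ∃ j0, j0 ≤ s ∧
            ((j0 ≤ h ∧ h % 2 = j0 % 2) ∨
              (h % 2 ≠ j0 % 2 ∧ l + 2 + ((j0 - (l+1)) + ((l+1) - j0)) ≤ h)) ∧
            0 < q 1 j0 k := by
          rcases hgood with ⟨hkh, hpar⟩ | ⟨hpar, hdist⟩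
          · rcases Nat.eq_zero_or_pos k with hk0 | hkpos
            · refine ⟨1, hs, Or.inl ⟨by omega, by omega⟩, ?_⟩
              have := hQ.1 1 hs 0 (Nat.zero_le _) (Or.inr rfl)
              rwa [hk0]
            · exact ⟨k-1, by omega, Or.inl ⟨by omega, by omega⟩,
                hQ.1 (k-1) (by omega) k hks (Or.inl (by omega))⟩
          · rcases lt_trichotomy k (l+1) with h1 | h1 | h1
            · exact ⟨k+1, by omega, Or.inr ⟨by omega, by omega⟩,
                hQ.1 (k+1) (by omega) k hks (Or.inr rfl)⟩
            · refine ⟨l+1, hl2, Or.inl ⟨by omega, by omega⟩, ?_⟩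
              rw [h1]
              exact hq11
            · exact ⟨k-1, by omega, Or.inr ⟨by omega, by omega⟩,
                hQ.1 (k-1) (by omega) k hks (Or.inl (by omega))⟩
        have hterm : ∀ j ∈ Finset.range (s+1), 0 ≤ c j * q 1 j k := by
          intro j hj
          have hjs : j ≤ s := by
            have := Finset.mem_range.mp hj; omega
          exact mul_nonneg (hc0 j hjs) (hq0 j hjs k hks)
        have hle : c j0 * q 1 j0 k ≤ ∑ j ∈ Finset.range (s+1), c j * q 1 j k :=
          Finset.single_le_sum hterm (Finset.mem_range.mpr (by omega))
        have hpos : 0 < c j0 * q 1 j0 k := mul_pos (hcpos j0 hj0s hj0g) hj0q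
        exact mul_pos (inv_pos.mpr hnpos) (lt_of_lt_of_le hpos hle)
  -- rank comparison for sums of idempotents
  have hrankP : ∀ (S : Finset ℕ) (c : ℕ → ℝ), S ⊆ Finset.range (s+1) →
      (∀ k ∈ S, c k ≠ 0) →
      (∑ k ∈ S, E k).rank ≤ (∑ k ∈ Finset.range (s+1), c k • E k).rank := by
    intro S c hSsub hcne
    have hNM : (∑ k ∈ S, (c k)⁻¹ • E k) * (∑ k' ∈ Finset.range (s+1), c k' • E k')
        = ∑ k ∈ S, E k := by
      rw [Finset.sum_mul]
      refine Finset.sum_congr rfl fun k hkS => ?_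
      have hks : k ≤ s := by
        have := Finset.mem_range.mp (hSsub hkS); omega
      rw [Finset.mul_sum]
      rw [Finset.sum_eq_single k]
      · rw [smul_mul_assoc, mul_smul_comm, hEE k hks, smul_smul,
          inv_mul_cancel₀ (hcne k hkS), one_smul]
      · intro k' hk' hne
        have hk's : k' ≤ s := by
          have := Finset.mem_range.mp hk'; omega
        rw [smul_mul_assoc, mul_smul_comm, hEE' k hks k' hk's (Ne.symm hne),
          smul_zero, smul_zero]
      · intro habs
        exact absurd (hSsub hkS) habs
    calc (∑ k ∈ S, E k).rank
        = ((∑ k ∈ S, (c k)⁻¹ • E k) * (∑ k' ∈ Finset.range (s+1), c k' • E k')).rank := by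
          rw [hNM]
      _ ≤ (∑ k' ∈ Finset.range (s+1), c k' • E k').rank := Matrix.rank_mul_le_right _ _
  -- assemble
  set h1 := 2*l+1-s with hh1
  obtain ⟨c1, hc1E, hc1nn, hc1pos⟩ := expand h1
  obtain ⟨c2, hc2E, hc2nn, hc2pos⟩ := expand s
  set S1 := (Finset.range (s+1)).filter (fun k => k ≤ h1 ∧ h1 % 2 = k % 2) with hS1
  set S2 := (Finset.range (s+1)).filter (fun k => ¬(k ≤ h1 ∧ h1 % 2 = k % 2)) with hS2
  have hsplit : (∑ k ∈ S1, E k) + (∑ k ∈ S2, E k) = 1 := by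
    rw [hS1, hS2, Finset.sum_filter_add_sum_filter_not]
    exact hE.sum_eq
  have hS1ne : ∀ k ∈ S1, c1 k ≠ 0 := by
    intro k hk
    rw [hS1, Finset.mem_filter, Finset.mem_range] at hk
    exact ne_of_gt (hc1pos k (by omega) (Or.inl ⟨hk.2.1, hk.2.2⟩))
  have hS2ne : ∀ k ∈ S2, c2 k ≠ 0 := by
    intro k hk
    rw [hS2, Finset.mem_filter, Finset.mem_range] at hk
    obtain ⟨hkr, hknot⟩ := hk
    have hks : k ≤ s := by omega
    refine ne_of_gt (hc2pos k hks ?_)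
    by_cases hpar : s % 2 = k % 2
    · exact Or.inl ⟨hks, hpar⟩
    · exact Or.inr ⟨hpar, by omega⟩
  have hrank1 : (∑ k ∈ S1, E k).rank ≤ (hadPow (E 1) h1).rank := by
    rw [hc1E]
    exact hrankP S1 c1 (Finset.filter_subset _ _) hS1ne
  have hrank2 : (∑ k ∈ S2, E k).rank ≤ (hadPow (E 1) s).rank := by
    rw [hc2E]
    exact hrankP S2 c2 (Finset.filter_subset _ _) hS2ne
  calc Fintype.card X
      = ((∑ k ∈ S1, E k) + (∑ k ∈ S2, E k)).rank := by rw [hsplit, Matrix.rank_one]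
    _ ≤ (∑ k ∈ S1, E k).rank + (∑ k ∈ S2, E k).rank := matrix_rank_add_le _ _
    _ ≤ (hadPow (E 1) h1).rank + (hadPow (E 1) s).rank := Nat.add_le_add hrank1 hrank2
    _ ≤ Nat.multichoose ((E 1).rank) h1 + Nat.multichoose ((E 1).rank) s :=
        Nat.add_le_add (rank_hadPow_le _ _) (rank_hadPow_le _ _)
    _ = ((E 1).rank + 2 * l - s).choose (2 * l + 1 - s) + ((E 1).rank + s - 1).choose s := by
        rw [Nat.multichoose_eq, Nat.multichoose_eq, hh1]
        congr 2
        omega
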